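/- arXiv:2002.06150 — 4 statements merged into one kernel-verified Lean document; each statement's English description precedes it below -/
import Mathlib

section
/- Let $(h^m)$ be a sequence in $L^1((0,T))$ bounded in the $L^1$ norm, converging almost everywhere on $(0,T)$ to a function $h\in L^1((0,T))$. Let $p:[0,\infty)\to\mathbb{R}$ be continuous with $p(s)>0$ for all $s$ and $\lim_{s\to\infty}p(s)=0$. Then there exists a function $h_0$ equal to $h$ almost everywhere on $(0,T)$ such that for every $\alpha>0$, $\lim_{m\to\infty}\int_0^T |h^m(t)\,p(|h^m(t)|)^\alpha - h(t)\,p(|h_0(t)|)^\alpha|\,dt = 0$. -/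
open MeasureTheory Filter Set Topology

theorem stmt0 (T : ℝ) (hT : 0 < T)
    (f : ℕ → ℝ → ℝ) (h : ℝ → ℝ) (p : ℝ → ℝ)
    (hf_int : ∀ m, IntegrableOn (f m) (Set.Ioo 0 T))
    (hf_bdd : ∃ C : ℝ, ∀ m, (∫ t in Set.Ioo (0:ℝ) T, |f m t|) ≤ C)
    (h_int : IntegrableOn h (Set.Ioo 0 T))
    (hae : ∀ᵐ t ∂(volume.restrict (Set.Ioo (0:ℝ) T)),
      Tendsto (fun m => f m t) atTop (𝓝 (h t)))
    (hp_cont : ContinuousOn p (Set.Ici 0))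
    (hp_pos : ∀ s ∈ Set.Ici (0:ℝ), 0 < p s)
    (hp_lim : Tendsto p atTop (𝓝 0)) :
    ∃ h₀ : ℝ → ℝ, (∀ᵐ t ∂(volume.restrict (Set.Ioo (0:ℝ) T)), h₀ t = h t) ∧
      ∀ α > (0:ℝ), Tendsto
        (fun m => ∫ t in Set.Ioo (0:ℝ) T,
          |f m t * p |f m t| ^ α - h t * p |h₀ t| ^ α|) atTop (𝓝 0) := by
  obtain ⟨C, hC⟩ := hf_bdd
  set μ := volume.restrict (Set.Ioo (0:ℝ) T) with hμ
  haveI hμfin : IsFiniteMeasure μ := by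
    constructor
    rw [hμ, Measure.restrict_apply_univ, Real.volume_Ioo]
    exact ENNReal.ofReal_lt_top
  refine ⟨h, Filter.Eventually.of_forall (fun _ => rfl), ?_⟩
  intro α hα
  -- q x = p |x| is continuous and positive everywhere
  have hq_cont : Continuous (fun x : ℝ => p |x|) :=
    hp_cont.comp_continuous continuous_abs (fun x => abs_nonneg x)
  have hq_pos : ∀ x : ℝ, 0 < p |x| := fun x => hp_pos _ (abs_nonneg x)
  set g : ℝ → ℝ := fun x => x * p |x| ^ α with hg
  have hg_cont : Continuous g := by
    exact continuous_id.mul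
      (hq_cont.rpow_const (fun x => Or.inl (ne_of_gt (hq_pos x))))
  -- measurability of compositions
  have hfm_meas : ∀ m, AEStronglyMeasurable (f m) μ := fun m =>
    (hf_int m).aestronglyMeasurable
  have hh_meas : AEStronglyMeasurable h μ := h_int.aestronglyMeasurable
  -- bounds on integrals of |f m| and |h|
  have hC0 : 0 ≤ C := le_trans (integral_nonneg (fun t => abs_nonneg _)) (hC 0)
  set Ch : ℝ := ∫ t, |h t| ∂μ with hCh
  have hCh0 : 0 ≤ Ch := integral_nonneg (fun t => abs_nonneg _)
  rw [Metric.tendsto_atTop]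
  intro ε hε
  set ε' : ℝ := ε / (4 * (C + Ch + 1)) with hε'def
  have hden : 0 < 4 * (C + Ch + 1) := by linarith
  have hε' : 0 < ε' := div_pos hε hden
  -- choose K
  have hδ : (0:ℝ) < ε' ^ (α⁻¹) := Real.rpow_pos_of_pos hε' _
  obtain ⟨K₀, hK₀⟩ := eventually_atTop.mp (hp_lim.eventually_lt_const hδ)
  set K : ℝ := max K₀ 1 with hK
  have hK1 : (1:ℝ) ≤ K := le_max_right _ _
  have hKpos : (0:ℝ) < K := lt_of_lt_of_le zero_lt_one hK1
  -- tail smallness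
  have hsmall : ∀ y : ℝ, K ≤ |y| → |g y| ≤ ε' * |y| := by
    intro y hy
    have hpy : p |y| < ε' ^ (α⁻¹) :=
      hK₀ _ (le_trans (le_max_left _ _) hy)
    have h1 : p |y| ^ α ≤ (ε' ^ (α⁻¹)) ^ α :=
      Real.rpow_le_rpow (le_of_lt (hq_pos y)) (le_of_lt hpy) (le_of_lt hα)
    rw [Real.rpow_inv_rpow (le_of_lt hε') (ne_of_gt hα)] at h1
    have h2 : |g y| = |y| * p |y| ^ α := by
      rw [hg]
      rw [abs_mul, abs_of_nonneg (le_of_lt (Real.rpow_pos_of_pos (hq_pos y) α))]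
    rw [h2, mul_comm ε' |y|]
    exact mul_le_mul_of_nonneg_left h1 (abs_nonneg y)
  -- truncation
  set τ : ℝ → ℝ := fun x => max (-K) (min x K) with hτdef
  have hτ_cont : Continuous τ := continuous_const.max (continuous_id.min continuous_const)
  have hτ_mem : ∀ x, τ x ∈ Set.Icc (-K) K := by
    intro x
    refine ⟨le_max_left _ _, max_le (by linarith) (min_le_right _ _)⟩
  have hτ_eq : ∀ x, |x| ≤ K → τ x = x := by
    intro x hx
    rw [abs_le] at hx
    rw [hτdef]
    simp only [min_eq_left hx.2, max_eq_right hx.1]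
  have hτ_abs : ∀ x, K < |x| → |τ x| = K := by
    intro x hx
    rcases le_or_gt x 0 with hx0 | hx0
    · have : x < -K := by
        rw [abs_of_nonpos hx0] at hx; linarith
      have : τ x = -K := by
        rw [hτdef]
        simp only [min_eq_left (by linarith : x ≤ K)]
        exact max_eq_left (le_of_lt this)
      rw [this, abs_neg, abs_of_pos hKpos]
    · have hxK : K < x := by rwa [abs_of_pos hx0] at hx
      have : τ x = K := by
        rw [hτdef]
        simp only [min_eq_right (le_of_lt hxK)]
        exact max_eq_right (by linarith)
      rw [this, abs_of_pos hKpos]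
  -- bound on g on [-K, K]
  obtain ⟨B, hB⟩ := (isCompact_Icc (a := -K) (b := K)).exists_bound_of_continuousOn
    hg_cont.continuousOn
  have hB' : ∀ x, |g (τ x)| ≤ B := fun x => hB _ (hτ_mem x)
  have hB0 : 0 ≤ B := le_trans (abs_nonneg _) (hB' 0)
  -- remainder bound
  have hrem : ∀ x : ℝ, |g x - g (τ x)| ≤ 2 * ε' * |x| := by
    intro x
    rcases le_or_gt |x| K with hx | hx
    · rw [hτ_eq x hx, sub_self, abs_zero]
      positivity
    · have h1 : |g x| ≤ ε' * |x| := hsmall x (le_of_lt hx)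
      have h2 : |g (τ x)| ≤ ε' * |x| := by
        have := hsmall (τ x) (le_of_eq (hτ_abs x hx).symm)
        rw [hτ_abs x hx] at this
        exact le_trans this (mul_le_mul_of_nonneg_left (le_of_lt hx) (le_of_lt hε'))
      calc |g x - g (τ x)| ≤ |g x| + |g (τ x)| := abs_sub _ _
        _ ≤ ε' * |x| + ε' * |x| := add_le_add h1 h2
        _ = 2 * ε' * |x| := by ring
  -- integrability facts
  have int_gK : ∀ (u : ℝ → ℝ), AEStronglyMeasurable u μ →
      Integrable (fun t => g (τ (u t))) μ := by
    intro u hu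
    refine Integrable.mono' (integrable_const B)
      ((hg_cont.comp hτ_cont).comp_aestronglyMeasurable hu) ?_
    exact Filter.Eventually.of_forall (fun t => by
      simpa [Real.norm_eq_abs] using hB' (u t))
  have int_g : ∀ (u : ℝ → ℝ), Integrable u μ →
      Integrable (fun t => g (u t)) μ := by
    intro u hu
    refine Integrable.mono' ((hu.abs.const_mul (2 * ε')).add (integrable_const B))
      (hg_cont.comp_aestronglyMeasurable hu.aestronglyMeasurable) ?_
    refine Filter.Eventually.of_forall (fun t => ?_)
    have : |g (u t)| ≤ |g (u t) - g (τ (u t))| + |g (τ (u t))| := by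
      have := abs_sub_abs_le_abs_sub (g (u t)) (g (τ (u t)))
      have h3 := abs_nonneg (g (τ (u t)))
      linarith [abs_sub_abs_le_abs_sub (g (u t)) (g (τ (u t)))]
    rw [Real.norm_eq_abs]
    exact le_trans this (add_le_add (hrem (u t)) (hB' (u t)))
  have int_gfm : ∀ m, Integrable (fun t => g (f m t)) μ := fun m => int_g _ (hf_int m)
  have int_gh : Integrable (fun t => g (h t)) μ := int_g _ h_int
  have int_gKfm : ∀ m, Integrable (fun t => g (τ (f m t))) μ :=
    fun m => int_gK _ (hfm_meas m)
  have int_gKh : Integrable (fun t => g (τ (h t))) μ := int_gK _ hh_meas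
  -- dominated convergence for truncated part
  have hDCT : Tendsto (fun m => ∫ t, |g (τ (f m t)) - g (τ (h t))| ∂μ)
      atTop (𝓝 0) := by
    have h0 : (0:ℝ) = ∫ t, (0:ℝ) ∂μ := by simp
    rw [h0]
    refine tendsto_integral_of_dominated_convergence (fun _ => 2 * B)
      (fun m => ((int_gKfm m).sub int_gKh).abs.aestronglyMeasurable)
      (integrable_const _) (fun m => Filter.Eventually.of_forall (fun t => ?_)) ?_
    · rw [Real.norm_eq_abs, abs_abs]
      calc |g (τ (f m t)) - g (τ (h t))| ≤ |g (τ (f m t))| + |g (τ (h t))| := abs_sub _ _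
        _ ≤ B + B := add_le_add (hB' _) (hB' _)
        _ = 2 * B := by ring
    · filter_upwards [hae] with t ht
      have h1 : Tendsto (fun m => g (τ (f m t))) atTop (𝓝 (g (τ (h t)))) :=
        ((hg_cont.comp hτ_cont).tendsto _).comp ht
      have h2 : Tendsto (fun m => g (τ (f m t)) - g (τ (h t))) atTop
          (𝓝 (g (τ (h t)) - g (τ (h t)))) := h1.sub tendsto_const_nhds
      have h3 := h2.abs
      simpa using h3
  -- finish
  have hhalfpos : 0 < ε / 2 := by linarith
  obtain ⟨N, hN⟩ := (Metric.tendsto_atTop.mp hDCT) (ε/2) hhalfpos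
  refine ⟨N, fun m hm => ?_⟩
  have hIm : ∫ t, |g (τ (f m t)) - g (τ (h t))| ∂μ < ε / 2 := by
    have := hN m hm
    rw [Real.dist_eq, sub_zero] at this
    exact lt_of_abs_lt this
  -- pointwise triangle inequality
  have hpt : ∀ t, |g (f m t) - g (h t)| ≤
      |g (τ (f m t)) - g (τ (h t))| + (|g (f m t) - g (τ (f m t))| + |g (h t) - g (τ (h t))|) := by
    intro t
    have e : g (f m t) - g (h t) =
        (g (τ (f m t)) - g (τ (h t))) + ((g (f m t) - g (τ (f m t))) - (g (h t) - g (τ (h t)))) := by ring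
    rw [e]
    refine le_trans (abs_add_le _ _) (add_le_add le_rfl (abs_sub _ _))
  have int_A : Integrable (fun t => |g (τ (f m t)) - g (τ (h t))|) μ :=
    ((int_gKfm m).sub int_gKh).abs
  have int_B1 : Integrable (fun t => |g (f m t) - g (τ (f m t))|) μ :=
    ((int_gfm m).sub (int_gKfm m)).abs
  have int_B2 : Integrable (fun t => |g (h t) - g (τ (h t))|) μ :=
    (int_gh.sub int_gKh).abs
  have step1 : ∫ t, |g (f m t) - g (h t)| ∂μ ≤
      ∫ t, (|g (τ (f m t)) - g (τ (h t))| +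
        (|g (f m t) - g (τ (f m t))| + |g (h t) - g (τ (h t))|)) ∂μ := by
    refine integral_mono ((int_gfm m).sub int_gh).abs (int_A.add (int_B1.add int_B2)) hpt
  have step2 : ∫ t, (|g (τ (f m t)) - g (τ (h t))| +
        (|g (f m t) - g (τ (f m t))| + |g (h t) - g (τ (h t))|)) ∂μ =
      (∫ t, |g (τ (f m t)) - g (τ (h t))| ∂μ) +
      ((∫ t, |g (f m t) - g (τ (f m t))| ∂μ) + (∫ t, |g (h t) - g (τ (h t))| ∂μ)) := by
    have e1 := integral_add int_A (int_B1.add int_B2)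
    have e2 := integral_add int_B1 int_B2
    simp only [Pi.add_apply] at e1 e2
    rw [e1, e2]
  -- tail integrals
  have tail1 : ∫ t, |g (f m t) - g (τ (f m t))| ∂μ ≤ 2 * ε' * C := by
    calc ∫ t, |g (f m t) - g (τ (f m t))| ∂μ ≤ ∫ t, 2 * ε' * |f m t| ∂μ :=
        integral_mono int_B1 ((hf_int m).abs.const_mul _) (fun t => hrem _)
      _ = 2 * ε' * ∫ t, |f m t| ∂μ := integral_const_mul _ _
      _ ≤ 2 * ε' * C := by
          have := hC m
          have h2 : 0 ≤ 2 * ε' := by positivity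
          exact mul_le_mul_of_nonneg_left this h2
  have tail2 : ∫ t, |g (h t) - g (τ (h t))| ∂μ ≤ 2 * ε' * Ch := by
    calc ∫ t, |g (h t) - g (τ (h t))| ∂μ ≤ ∫ t, 2 * ε' * |h t| ∂μ :=
        integral_mono int_B2 (h_int.abs.const_mul _) (fun t => hrem _)
      _ = 2 * ε' * Ch := integral_const_mul _ _
  -- final arithmetic
  have hint_nonneg : 0 ≤ ∫ t, |g (f m t) - g (h t)| ∂μ :=
    integral_nonneg (fun t => abs_nonneg _)
  have htails : 2 * ε' * C + 2 * ε' * Ch < ε / 2 := by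
    have : 2 * ε' * C + 2 * ε' * Ch = 2 * ε' * (C + Ch) := by ring
    have h4 : ε' * (4 * (C + Ch + 1)) = ε := div_mul_cancel₀ ε (ne_of_gt hden)
    nlinarith [hε', hC0, hCh0]
  have hfinal : ∫ t, |g (f m t) - g (h t)| ∂μ < ε := by
    have := le_trans step1 (le_of_eq step2)
    linarith
  rw [Real.dist_eq, sub_zero]
  rw [abs_of_nonneg hint_nonneg]
  exact hfinal
end

section
/- Let $(h^m)$ be a sequence in $L^1((0,T))$ bounded in $L^1$ norm, converging a.e. on $(0,T)$ to $h\in L^1((0,T))$. Let $p:[0,\infty)\to(0,\infty)$ be continuous and bounded with $\lim_{s\to\infty}p(s)=0$. Then $\lim_{\alpha\to 0^+}\lim_{m\to\infty}\int_0^T h^m(t)\,p(|h^m(t)|)^\alpha\,dt = \int_0^T h(t)\,dt$, where the inner limit exists for each $\alpha>0$. -/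
open MeasureTheory Filter Set Topology

theorem stmt1 (T : ℝ) (hT : 0 < T)
    (f : ℕ → ℝ → ℝ) (h : ℝ → ℝ) (p : ℝ → ℝ)
    (hf_int : ∀ m, IntegrableOn (f m) (Set.Ioo 0 T))
    (hf_bdd : ∃ C : ℝ, ∀ m, (∫ t in Set.Ioo (0:ℝ) T, |f m t|) ≤ C)
    (h_int : IntegrableOn h (Set.Ioo 0 T))
    (hae : ∀ᵐ t ∂(volume.restrict (Set.Ioo (0:ℝ) T)),
      Tendsto (fun m => f m t) atTop (𝓝 (h t)))
    (hp_cont : ContinuousOn p (Set.Ici 0))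
    (hp_pos : ∀ s ∈ Set.Ici (0:ℝ), 0 < p s)
    (hp_bdd : ∃ M : ℝ, ∀ s ∈ Set.Ici (0:ℝ), p s ≤ M)
    (hp_lim : Tendsto p atTop (𝓝 0)) :
    ∃ L : ℝ → ℝ,
      (∀ α > (0:ℝ), Tendsto
        (fun m => ∫ t in Set.Ioo (0:ℝ) T, f m t * p |f m t| ^ α) atTop (𝓝 (L α))) ∧
      Tendsto L (𝓝[>] (0:ℝ)) (𝓝 (∫ t in Set.Ioo (0:ℝ) T, h t)) := by
  obtain ⟨C, hC⟩ := hf_bdd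
  obtain ⟨M, hM⟩ := hp_bdd
  have hM0 : 0 < M := lt_of_lt_of_le (hp_pos 0 Set.self_mem_Ici) (hM 0 Set.self_mem_Ici)
  have hC0 : 0 ≤ C := le_trans (integral_nonneg fun t => abs_nonneg _) (hC 0)
  haveI : IsFiniteMeasure (volume.restrict (Set.Ioo (0:ℝ) T)) := by
    constructor
    rw [Measure.restrict_apply_univ, Real.volume_Ioo]
    exact ENNReal.ofReal_lt_top
  have hq_cont : Continuous fun x : ℝ => p |x| :=
    hp_cont.comp_continuous continuous_abs fun x => abs_nonneg x
  have hq_pos : ∀ x : ℝ, 0 < p |x| := fun x => hp_pos _ (abs_nonneg x)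
  have hq_le : ∀ x : ℝ, p |x| ≤ M := fun x => hM _ (abs_nonneg x)
  have hφ_cont : ∀ α : ℝ, Continuous fun x : ℝ => x * p |x| ^ α := fun α =>
    continuous_id.mul (hq_cont.rpow_const fun x => Or.inl (hq_pos x).ne')
  have hφ_int : ∀ (α : ℝ), 0 ≤ α → ∀ g : ℝ → ℝ, IntegrableOn g (Set.Ioo 0 T) →
      IntegrableOn (fun t => g t * p |g t| ^ α) (Set.Ioo 0 T) := by
    intro α hα g hg
    refine Integrable.mono' (hg.abs.mul_const (M ^ α))
      ((hφ_cont α).comp_aestronglyMeasurable hg.aestronglyMeasurable) ?_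
    filter_upwards with t
    rw [Real.norm_eq_abs, abs_mul, abs_of_nonneg (Real.rpow_nonneg (hq_pos _).le _)]
    exact mul_le_mul_of_nonneg_left
      (Real.rpow_le_rpow (hq_pos _).le (hq_le _) hα) (abs_nonneg _)
  set Ih := ∫ t in Set.Ioo (0:ℝ) T, |h t| with hIhdef
  have hIh0 : 0 ≤ Ih := integral_nonneg fun t => abs_nonneg _
  refine ⟨fun α => ∫ t in Set.Ioo (0:ℝ) T, h t * p |h t| ^ α, ?_, ?_⟩
  · intro α hα
    rw [Metric.tendsto_atTop]
    intro ε hε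
    have hB : (0:ℝ) < C + Ih + 1 := by positivity
    set δ : ℝ := (ε / (6 * (C + Ih + 1))) ^ α⁻¹ with hδdef
    have hδpos : 0 < δ := Real.rpow_pos_of_pos (by positivity) _
    have hδα : δ ^ α = ε / (6 * (C + Ih + 1)) :=
      Real.rpow_inv_rpow (by positivity) hα.ne'
    have hδα0 : 0 ≤ δ ^ α := Real.rpow_nonneg hδpos.le _
    obtain ⟨K₀, hK₀⟩ := eventually_atTop.1 (hp_lim.eventually_lt_const hδpos)
    set K : ℝ := max K₀ 1 with hKdef
    have hK1 : (1:ℝ) ≤ K := le_max_right _ _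
    have hK0 : (0:ℝ) < K := lt_of_lt_of_le one_pos hK1
    have hpK : ∀ s : ℝ, K ≤ s → p s ≤ δ := fun s hs =>
      (hK₀ s (le_trans (le_max_left _ _) hs)).le
    set τ : ℝ → ℝ := fun x => max (min x K) (-K) with hτdef
    have hτ_cont : Continuous τ := (continuous_id.min continuous_const).max continuous_const
    have hτ_abs : ∀ x, |τ x| ≤ K := by
      intro x
      rw [abs_le]
      exact ⟨le_max_right _ _, max_le (min_le_right _ _) (by linarith)⟩
    have key : ∀ x : ℝ, |x * p |x| ^ α - τ x * p |τ x| ^ α| ≤ 2 * δ ^ α * |x| := by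
      intro x
      by_cases hx : |x| ≤ K
      · have hτx : τ x = x := by
          rw [hτdef]
          dsimp only
          rw [min_eq_left (abs_le.1 hx).2, max_eq_left (abs_le.1 hx).1]
        rw [hτx, sub_self, abs_zero]
        positivity
      · push_neg at hx
        have hτK : |τ x| = K := by
          rcases le_or_gt 0 x with h0 | h0
          · have hxK : K < x := by rwa [abs_of_nonneg h0] at hx
            rw [hτdef]; dsimp only
            rw [min_eq_right hxK.le, max_eq_left (by linarith), abs_of_pos hK0]
          · have hxK : x < -K := by rw [abs_of_neg h0] at hx; linarith
            rw [hτdef]; dsimp only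
            rw [min_eq_left (by linarith : x ≤ K), max_eq_right hxK.le, abs_neg,
              abs_of_pos hK0]
        have h1 : |x * p |x| ^ α| ≤ δ ^ α * |x| := by
          rw [abs_mul, abs_of_nonneg (Real.rpow_nonneg (hq_pos _).le _), mul_comm]
          exact mul_le_mul_of_nonneg_right
            (Real.rpow_le_rpow (hq_pos _).le (hpK _ hx.le) hα.le) (abs_nonneg _)
        have h2 : |τ x * p |τ x| ^ α| ≤ δ ^ α * |x| := by
          rw [abs_mul, abs_of_nonneg (Real.rpow_nonneg (hq_pos _).le _), hτK]
          calc K * p K ^ α ≤ K * δ ^ α :=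
                mul_le_mul_of_nonneg_left
                  (Real.rpow_le_rpow (hp_pos K (le_of_lt hK0)).le (hpK K le_rfl) hα.le)
                  hK0.le
            _ ≤ |x| * δ ^ α := mul_le_mul_of_nonneg_right hx.le hδα0
            _ = δ ^ α * |x| := mul_comm _ _
        calc |x * p |x| ^ α - τ x * p |τ x| ^ α|
            ≤ |x * p |x| ^ α| + |τ x * p |τ x| ^ α| := abs_sub _ _
          _ ≤ δ ^ α * |x| + δ ^ α * |x| := add_le_add h1 h2
          _ = 2 * δ ^ α * |x| := by ring
    have hτφ_int : ∀ g : ℝ → ℝ, IntegrableOn g (Set.Ioo 0 T) →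
        IntegrableOn (fun t => τ (g t) * p |τ (g t)| ^ α) (Set.Ioo 0 T) := by
      intro g hg
      refine Integrable.mono' (integrable_const (K * M ^ α))
        (((hφ_cont α).comp hτ_cont).comp_aestronglyMeasurable hg.aestronglyMeasurable) ?_
      filter_upwards with t
      rw [Real.norm_eq_abs, abs_mul, abs_of_nonneg (Real.rpow_nonneg (hq_pos _).le _)]
      exact mul_le_mul (hτ_abs _) (Real.rpow_le_rpow (hq_pos _).le (hq_le _) hα.le)
        (Real.rpow_nonneg (hq_pos _).le _) hK0.le
    have hdiff : ∀ g : ℝ → ℝ, IntegrableOn g (Set.Ioo 0 T) →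
        |(∫ t in Set.Ioo (0:ℝ) T, g t * p |g t| ^ α) -
          ∫ t in Set.Ioo (0:ℝ) T, τ (g t) * p |τ (g t)| ^ α| ≤
          2 * δ ^ α * ∫ t in Set.Ioo (0:ℝ) T, |g t| := by
      intro g hg
      rw [← integral_sub (hφ_int α hα.le g hg) (hτφ_int g hg)]
      calc |∫ t in Set.Ioo (0:ℝ) T, (g t * p |g t| ^ α - τ (g t) * p |τ (g t)| ^ α)|
          ≤ ∫ t in Set.Ioo (0:ℝ) T, |g t * p |g t| ^ α - τ (g t) * p |τ (g t)| ^ α| :=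
            by
              simpa only [Real.norm_eq_abs] using
                norm_integral_le_integral_norm
                  (fun t => g t * p |g t| ^ α - τ (g t) * p |τ (g t)| ^ α)
        _ ≤ ∫ t in Set.Ioo (0:ℝ) T, 2 * δ ^ α * |g t| :=
            integral_mono ((hφ_int α hα.le g hg).sub (hτφ_int g hg)).abs
              (hg.abs.const_mul _) fun t => key (g t)
        _ = 2 * δ ^ α * ∫ t in Set.Ioo (0:ℝ) T, |g t| := integral_const_mul _ _
    have hdct : Tendsto (fun m => ∫ t in Set.Ioo (0:ℝ) T, τ (f m t) * p |τ (f m t)| ^ α)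
        atTop (𝓝 (∫ t in Set.Ioo (0:ℝ) T, τ (h t) * p |τ (h t)| ^ α)) := by
      refine tendsto_integral_of_dominated_convergence (fun _ => K * M ^ α)
        (fun m => ((hφ_cont α).comp hτ_cont).comp_aestronglyMeasurable
          (hf_int m).aestronglyMeasurable)
        (integrable_const _) (fun m => ?_) ?_
      · filter_upwards with t
        rw [Real.norm_eq_abs, abs_mul, abs_of_nonneg (Real.rpow_nonneg (hq_pos _).le _)]
        exact mul_le_mul (hτ_abs _) (Real.rpow_le_rpow (hq_pos _).le (hq_le _) hα.le)
          (Real.rpow_nonneg (hq_pos _).le _) hK0.le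
      · filter_upwards [hae] with t ht
        exact ((hφ_cont α).comp hτ_cont).continuousAt.tendsto.comp ht
    obtain ⟨N, hN⟩ := (Metric.tendsto_atTop.1 hdct) (ε / 3) (by positivity)
    refine ⟨N, fun m hm => ?_⟩
    have h1 := hdiff (f m) (hf_int m)
    have h2 := hdiff h h_int
    have h3 := hN m hm
    rw [Real.dist_eq] at h3 ⊢
    have hfm : (∫ t in Set.Ioo (0:ℝ) T, |f m t|) ≤ C := hC m
    have habsfm : (0:ℝ) ≤ ∫ t in Set.Ioo (0:ℝ) T, |f m t| :=
      integral_nonneg fun t => abs_nonneg _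
    have h1' : |(∫ t in Set.Ioo (0:ℝ) T, f m t * p |f m t| ^ α) -
        ∫ t in Set.Ioo (0:ℝ) T, τ (f m t) * p |τ (f m t)| ^ α| ≤ 2 * δ ^ α * C :=
      le_trans h1 (by nlinarith)
    have hchain := abs_sub_le
      (∫ t in Set.Ioo (0:ℝ) T, f m t * p |f m t| ^ α)
      (∫ t in Set.Ioo (0:ℝ) T, τ (f m t) * p |τ (f m t)| ^ α)
      (∫ t in Set.Ioo (0:ℝ) T, h t * p |h t| ^ α)
    have hchain2 := abs_sub_le
      (∫ t in Set.Ioo (0:ℝ) T, τ (f m t) * p |τ (f m t)| ^ α)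
      (∫ t in Set.Ioo (0:ℝ) T, τ (h t) * p |τ (h t)| ^ α)
      (∫ t in Set.Ioo (0:ℝ) T, h t * p |h t| ^ α)
    have h2' : |(∫ t in Set.Ioo (0:ℝ) T, τ (h t) * p |τ (h t)| ^ α) -
        ∫ t in Set.Ioo (0:ℝ) T, h t * p |h t| ^ α| ≤ 2 * δ ^ α * Ih := by
      rw [abs_sub_comm]; exact h2
    have hq0 : 0 < ε / (6 * (C + Ih + 1)) := by positivity
    have hqe : ε / (6 * (C + Ih + 1)) * (6 * (C + Ih + 1)) = ε :=
      div_mul_cancel₀ _ (by positivity)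
    have hsmall : 2 * δ ^ α * C + 2 * δ ^ α * Ih ≤ 2 * ε / 3 - ε / 3 + ε / 3 := by
      rw [hδα]
      nlinarith
    linarith
  · refine tendsto_integral_filter_of_dominated_convergence (fun t => |h t| * max M 1)
      ?_ ?_ ?_ ?_
    · filter_upwards with α
      exact (hφ_cont α).comp_aestronglyMeasurable h_int.aestronglyMeasurable
    · filter_upwards [Ioo_mem_nhdsGT_of_mem (Set.left_mem_Ico.2 one_pos)] with α hα
      filter_upwards with t
      rw [Real.norm_eq_abs, abs_mul, abs_of_nonneg (Real.rpow_nonneg (hq_pos _).le _)]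
      refine mul_le_mul_of_nonneg_left ?_ (abs_nonneg _)
      rcases le_total (p |h t|) 1 with h1 | h1
      · exact le_trans (Real.rpow_le_one (hq_pos _).le h1 hα.1.le) (le_max_right _ _)
      · calc p |h t| ^ α ≤ p |h t| ^ (1:ℝ) :=
            Real.rpow_le_rpow_of_exponent_le h1 hα.2.le
          _ = p |h t| := Real.rpow_one _
          _ ≤ max M 1 := le_trans (hq_le _) (le_max_left _ _)
    · exact h_int.abs.mul_const _
    · filter_upwards with t
      have hb : Tendsto (fun α : ℝ => p |h t| ^ α) (𝓝[>] (0:ℝ)) (𝓝 1) := by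
        have hc := (Real.continuousAt_const_rpow (a := p |h t|) (b := 0)
          (hq_pos (h t)).ne').tendsto
        simpa [Real.rpow_zero] using hc.mono_left nhdsWithin_le_nhds
      have := hb.const_mul (h t)
      simpa using this
end

section
/- Let $f:[s,t]\to\mathbb{R}$ be continuous with $f(s)<R$ and $f(t)<R$, $R>0$. Among the connected components $(a,b)$ of $\{\tau: R<f(\tau)<2R\}$, call a component of type '12' if $f(a)=R$ and $f(b)=2R$, and of type '21' if $f(a)=2R$ and $f(b)=R$. Then the number of components of type '12' is finite, the number of components of type '21' is finite, and these two numbers are equal. -/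
open Filter Set Topology

/-- `(a, b)` is a connected component of the open set `U ⊆ ℝ`:
a maximal open interval contained in `U`. -/
def IsCompOf (U : Set ℝ) (a b : ℝ) : Prop :=
  a < b ∧ Set.Ioo a b ⊆ U ∧ a ∉ U ∧ b ∉ U

/-- The adjacent `21`-component to the right of a `12`-component. -/
noncomputable def Phi (t R : ℝ) (f : ℝ → ℝ) (q : ℝ × ℝ) : ℝ × ℝ :=
  (sSup {τ ∈ Set.Icc q.2 (sInf {τ ∈ Set.Icc q.2 t | f τ = R}) | 2*R ≤ f τ},
   sInf {τ ∈ Set.Icc q.2 t | f τ = R})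

/-- The adjacent `12`-component to the left of a `21`-component. -/
noncomputable def Psi (s R : ℝ) (f : ℝ → ℝ) (q : ℝ × ℝ) : ℝ × ℝ :=
  (sSup {τ ∈ Set.Icc s q.1 | f τ = R},
   sInf {τ ∈ Set.Icc (sSup {τ ∈ Set.Icc s q.1 | f τ = R}) q.1 | 2*R ≤ f τ})

lemma closed_eq (f : ℝ → ℝ) (p q R : ℝ) (hf : ContinuousOn f (Set.Icc p q)) :
    IsClosed {τ ∈ Set.Icc p q | f τ = R} :=
  hf.preimage_isClosed_of_isClosed isClosed_Icc isClosed_singleton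

lemma closed_ge (f : ℝ → ℝ) (p q R : ℝ) (hf : ContinuousOn f (Set.Icc p q)) :
    IsClosed {τ ∈ Set.Icc p q | 2*R ≤ f τ} :=
  hf.preimage_isClosed_of_isClosed isClosed_Icc isClosed_Ici

/-- Two components through a common point coincide. -/
lemma comp_unique {U : Set ℝ} {a b a' b' m : ℝ} (h : IsCompOf U a b)
    (h' : IsCompOf U a' b') (hm : m ∈ Set.Ioo a b) (hm' : m ∈ Set.Ioo a' b') :
    a = a' ∧ b = b' := by
  have hA : a = a' := by
    rcases lt_trichotomy a a' with hlt | he | hgt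
    · exact absurd (h.2.1 ⟨hlt, lt_trans hm'.1 hm.2⟩) h'.2.2.1
    · exact he
    · exact absurd (h'.2.1 ⟨hgt, lt_trans hm.1 hm'.2⟩) h.2.2.1
  subst hA
  refine ⟨rfl, ?_⟩
  rcases lt_trichotomy b b' with hlt | he | hgt
  · exact absurd (h'.2.1 ⟨lt_trans hm.1 hm.2, hlt⟩) h.2.2.2
  · exact he
  · exact absurd (h.2.1 ⟨lt_trans hm'.1 hm'.2, hgt⟩) h'.2.2.2

lemma forward (s t R : ℝ) (hR : 0 < R)
    (f : ℝ → ℝ) (hf : ContinuousOn f (Set.Icc s t)) (hft : f t < R)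
    (a b : ℝ)
    (hcomp : IsCompOf {τ ∈ Set.Ioo s t | R < f τ ∧ f τ < 2*R} a b)
    (ha : f a = R) (hb : f b = 2*R) :
    ∃ d c : ℝ, Phi t R f (a, b) = (d, c) ∧
      IsCompOf {τ ∈ Set.Ioo s t | R < f τ ∧ f τ < 2*R} d c ∧
      f d = 2*R ∧ f c = R ∧ Psi s R f (d, c) = (a, b) := by
  obtain ⟨hab, hsub, haU, hbU⟩ := hcomp
  have hsub' : Set.Ioo a b ⊆ Set.Ioo s t := fun τ hτ => (hsub hτ).1
  have hsa : s ≤ a := ((Set.Ioo_subset_Ioo_iff hab).1 hsub').1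
  have hbt : b ≤ t := ((Set.Ioo_subset_Ioo_iff hab).1 hsub').2
  have hsb : s ≤ b := le_trans hsa hab.le
  -- the first return of f to the level R after b
  set S1 : Set ℝ := {τ ∈ Set.Icc b t | f τ = R} with hS1
  have hfbt : ContinuousOn f (Set.Icc b t) := hf.mono (Set.Icc_subset_Icc hsb le_rfl)
  have hS1ne : S1.Nonempty := by
    obtain ⟨τ, hτ, hfτ⟩ := intermediate_value_Icc' hbt hfbt
      ⟨hft.le, by rw [hb]; linarith⟩
    exact ⟨τ, hτ, hfτ⟩
  have hS1bdd : BddBelow S1 := ⟨b, fun τ hτ => hτ.1.1⟩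
  set c := sInf S1 with hc
  have hcS1 : c ∈ S1 := (closed_eq f b t R hfbt).csInf_mem hS1ne hS1bdd
  have hfc : f c = R := hcS1.2
  have hct : c ≤ t := hcS1.1.2
  have hbc : b < c := hcS1.1.1.lt_of_ne (fun h => by rw [← h, hb] at hfc; linarith)
  have hgtR : ∀ τ ∈ Set.Ico b c, R < f τ := by
    intro τ hτ
    by_contra hle
    push_neg at hle
    have hτt : τ ≤ t := le_trans hτ.2.le hct
    obtain ⟨σ, hσ, hfσ⟩ := intermediate_value_Icc' hτ.1
      (hf.mono (Set.Icc_subset_Icc hsb hτt)) ⟨hle, by rw [hb]; linarith⟩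
    have : c ≤ σ := csInf_le hS1bdd ⟨⟨hσ.1, le_trans hσ.2 hτt⟩, hfσ⟩
    have : σ ≤ τ := hσ.2
    have : τ < c := hτ.2
    linarith
  -- the last time f is ≥ 2R before c
  set S2 : Set ℝ := {τ ∈ Set.Icc b c | 2*R ≤ f τ} with hS2
  have hfbc : ContinuousOn f (Set.Icc b c) := hf.mono (Set.Icc_subset_Icc hsb hct)
  have hS2ne : S2.Nonempty := ⟨b, ⟨le_rfl, hbc.le⟩, hb.ge⟩
  have hS2bdd : BddAbove S2 := ⟨c, fun τ hτ => hτ.1.2⟩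
  set d := sSup S2 with hd
  have hdS2 : d ∈ S2 := (closed_ge f b c R hfbc).csSup_mem hS2ne hS2bdd
  have hbd : b ≤ d := hdS2.1.1
  have hdc : d < c := hdS2.1.2.lt_of_ne
    (fun h => by have h2 := hdS2.2; rw [h, hfc] at h2; linarith)
  have hlt2R : ∀ τ ∈ Set.Ioc d c, f τ < 2*R := by
    intro τ hτ
    by_contra hge
    push_neg at hge
    have : τ ≤ d := le_csSup hS2bdd ⟨⟨le_trans hbd hτ.1.le, hτ.2⟩, hge⟩
    linarith [hτ.1]
  have hfd : f d = 2*R := by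
    refine le_antisymm ?_ hdS2.2
    by_contra hgt
    push_neg at hgt
    obtain ⟨σ, hσ, hfσ⟩ := intermediate_value_Icc' hdc.le
      (hf.mono (Set.Icc_subset_Icc (le_trans hsb hbd) hct)) ⟨by rw [hfc]; linarith, hgt.le⟩
    have hσd : d < σ := hσ.1.lt_of_ne (by rintro rfl; linarith)
    have := hlt2R σ ⟨hσd, hσ.2⟩
    linarith
  have hcompdc : IsCompOf {τ ∈ Set.Ioo s t | R < f τ ∧ f τ < 2*R} d c := by
    refine ⟨hdc, fun τ hτ => ?_, fun h => by have h2 := h.2.2; rw [hfd] at h2; linarith,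
      fun h => by have h2 := h.2.1; rw [hfc] at h2; linarith⟩
    have hsτ : s < τ := lt_of_le_of_lt (le_trans hsa hab.le) (lt_of_le_of_lt hbd hτ.1)
    exact ⟨⟨hsτ, lt_of_lt_of_le hτ.2 hct⟩,
      hgtR τ ⟨le_trans hbd hτ.1.le, hτ.2⟩, hlt2R τ ⟨hτ.1, hτ.2.le⟩⟩
  refine ⟨d, c, ?_, hcompdc, hfd, hfc, ?_⟩
  · simp only [Phi, ← hS1, ← hc, ← hS2, ← hd]
  · -- recovery: Psi (d, c) = (a, b)
    have hA : sSup {τ ∈ Set.Icc s d | f τ = R} = a := by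
      refine le_antisymm (csSup_le ⟨a, ⟨hsa, le_trans hab.le hbd⟩, ha⟩ ?_)
        (le_csSup ⟨d, fun τ hτ => hτ.1.2⟩ ⟨⟨hsa, le_trans hab.le hbd⟩, ha⟩)
      rintro τ ⟨⟨hsτ, hτd⟩, hfτ⟩
      by_contra hgt
      push_neg at hgt
      rcases lt_or_ge τ b with hτb | hbτ
      · have := (hsub ⟨hgt, hτb⟩).2.1
        linarith
      · have := hgtR τ ⟨hbτ, lt_of_le_of_lt hτd hdc⟩
        linarith
    have hB : sInf {τ ∈ Set.Icc a d | 2*R ≤ f τ} = b := by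
      refine le_antisymm (csInf_le ⟨a, fun τ hτ => hτ.1.1⟩ ⟨⟨hab.le, hbd⟩, hb.ge⟩)
        (le_csInf ⟨b, ⟨hab.le, hbd⟩, hb.ge⟩ ?_)
      rintro τ ⟨⟨haτ, hτd⟩, hfτ⟩
      by_contra hlt
      push_neg at hlt
      rcases eq_or_lt_of_le haτ with rfl | haτ'
      · rw [ha] at hfτ; linarith
      · have := (hsub ⟨haτ', hlt⟩).2.2
        linarith
    simp only [Psi, hA, hB]

lemma backward (s t R : ℝ) (hR : 0 < R)
    (f : ℝ → ℝ) (hf : ContinuousOn f (Set.Icc s t)) (hfs : f s < R)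
    (a b : ℝ)
    (hcomp : IsCompOf {τ ∈ Set.Ioo s t | R < f τ ∧ f τ < 2*R} a b)
    (ha : f a = 2*R) (hb : f b = R) :
    ∃ c d : ℝ, Psi s R f (a, b) = (c, d) ∧
      IsCompOf {τ ∈ Set.Ioo s t | R < f τ ∧ f τ < 2*R} c d ∧
      f c = R ∧ f d = 2*R ∧ Phi t R f (c, d) = (a, b) := by
  obtain ⟨hab, hsub, haU, hbU⟩ := hcomp
  have hsub' : Set.Ioo a b ⊆ Set.Ioo s t := fun τ hτ => (hsub hτ).1
  have hsa : s ≤ a := ((Set.Ioo_subset_Ioo_iff hab).1 hsub').1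
  have hbt : b ≤ t := ((Set.Ioo_subset_Ioo_iff hab).1 hsub').2
  have hat : a ≤ t := le_trans hab.le hbt
  -- the last visit of f to the level R before a
  set T1 : Set ℝ := {τ ∈ Set.Icc s a | f τ = R} with hT1
  have hfsa : ContinuousOn f (Set.Icc s a) := hf.mono (Set.Icc_subset_Icc le_rfl hat)
  have hT1ne : T1.Nonempty := by
    obtain ⟨τ, hτ, hfτ⟩ := intermediate_value_Icc hsa hfsa
      ⟨hfs.le, by rw [ha]; linarith⟩
    exact ⟨τ, hτ, hfτ⟩
  have hT1bdd : BddAbove T1 := ⟨a, fun τ hτ => hτ.1.2⟩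
  set c := sSup T1 with hc
  have hcT1 : c ∈ T1 := (closed_eq f s a R hfsa).csSup_mem hT1ne hT1bdd
  have hfc : f c = R := hcT1.2
  have hsc : s ≤ c := hcT1.1.1
  have hca : c < a := hcT1.1.2.lt_of_ne (fun h => by rw [h, ha] at hfc; linarith)
  have hgtR : ∀ τ ∈ Set.Ioc c a, R < f τ := by
    intro τ hτ
    by_contra hle
    push_neg at hle
    have hsτ : s ≤ τ := le_trans hsc hτ.1.le
    obtain ⟨σ, hσ, hfσ⟩ := intermediate_value_Icc hτ.2
      (hf.mono (Set.Icc_subset_Icc hsτ hat)) ⟨hle, by rw [ha]; linarith⟩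
    have : σ ≤ c := le_csSup hT1bdd ⟨⟨le_trans hsτ hσ.1, hσ.2⟩, hfσ⟩
    have : τ ≤ σ := hσ.1
    have : c < τ := hτ.1
    linarith
  -- the first time f is ≥ 2R after c
  set T2 : Set ℝ := {τ ∈ Set.Icc c a | 2*R ≤ f τ} with hT2
  have hfca : ContinuousOn f (Set.Icc c a) := hf.mono (Set.Icc_subset_Icc hsc hat)
  have hT2ne : T2.Nonempty := ⟨a, ⟨hca.le, le_rfl⟩, ha.ge⟩
  have hT2bdd : BddBelow T2 := ⟨c, fun τ hτ => hτ.1.1⟩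
  set d := sInf T2 with hd
  have hdT2 : d ∈ T2 := (closed_ge f c a R hfca).csInf_mem hT2ne hT2bdd
  have hda : d ≤ a := hdT2.1.2
  have hcd : c < d := hdT2.1.1.lt_of_ne
    (fun h => by have h2 := hdT2.2; rw [← h, hfc] at h2; linarith)
  have hlt2R : ∀ τ ∈ Set.Ico c d, f τ < 2*R := by
    intro τ hτ
    by_contra hge
    push_neg at hge
    have : d ≤ τ := csInf_le hT2bdd ⟨⟨hτ.1, le_trans hτ.2.le hda⟩, hge⟩
    linarith [hτ.2]
  have hfd : f d = 2*R := by
    refine le_antisymm ?_ hdT2.2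
    by_contra hgt
    push_neg at hgt
    obtain ⟨σ, hσ, hfσ⟩ := intermediate_value_Icc hcd.le
      (hf.mono (Set.Icc_subset_Icc hsc (le_trans hda hat))) ⟨by rw [hfc]; linarith, hgt.le⟩
    have hσd : σ < d := hσ.2.lt_of_ne (by rintro rfl; linarith)
    have := hlt2R σ ⟨hσ.1, hσd⟩
    linarith
  have hsc' : s < c := hsc.lt_of_ne (fun h => by rw [← h] at hfc; linarith)
  have hcompcd : IsCompOf {τ ∈ Set.Ioo s t | R < f τ ∧ f τ < 2*R} c d := by
    refine ⟨hcd, fun τ hτ => ?_, fun h => by have h2 := h.2.1; rw [hfc] at h2; linarith,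
      fun h => by have h2 := h.2.2; rw [hfd] at h2; linarith⟩
    have hτt : τ < t := lt_of_lt_of_le (lt_of_lt_of_le hτ.2 (le_trans hda hab.le)) hbt
    exact ⟨⟨lt_trans hsc' hτ.1, hτt⟩,
      hgtR τ ⟨hτ.1, le_trans hτ.2.le hda⟩, hlt2R τ ⟨hτ.1.le, hτ.2⟩⟩
  refine ⟨c, d, ?_, hcompcd, hfc, hfd, ?_⟩
  · simp only [Psi, ← hT1, ← hc, ← hT2, ← hd]
  · -- recovery: Phi (c, d) = (a, b)
    have hA : sInf {τ ∈ Set.Icc d t | f τ = R} = b := by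
      refine le_antisymm (csInf_le ⟨d, fun τ hτ => hτ.1.1⟩ ⟨⟨le_trans hda hab.le, hbt⟩, hb⟩)
        (le_csInf ⟨b, ⟨le_trans hda hab.le, hbt⟩, hb⟩ ?_)
      rintro τ ⟨⟨hdτ, hτt⟩, hfτ⟩
      by_contra hlt
      push_neg at hlt
      rcases le_or_gt τ a with hτa | haτ
      · have := hgtR τ ⟨lt_of_lt_of_le hcd hdτ, hτa⟩
        linarith
      · have := (hsub ⟨haτ, hlt⟩).2.1
        linarith
    have hB : sSup {τ ∈ Set.Icc d b | 2*R ≤ f τ} = a := by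
      refine le_antisymm (csSup_le ⟨a, ⟨hda, hab.le⟩, ha.ge⟩ ?_)
        (le_csSup ⟨b, fun τ hτ => hτ.1.2⟩ ⟨⟨hda, hab.le⟩, ha.ge⟩)
      rintro τ ⟨⟨hdτ, hτb⟩, hfτ⟩
      by_contra hgt
      push_neg at hgt
      rcases eq_or_lt_of_le hτb with rfl | hτb'
      · rw [hb] at hfτ; linarith
      · have := (hsub ⟨hgt, hτb'⟩).2.2
        linarith
    simp only [Phi, hA, hB]

theorem stmt7 (s t R : ℝ) (hst : s < t) (hR : 0 < R)
    (f : ℝ → ℝ) (hf : ContinuousOn f (Set.Icc s t))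
    (hfs : f s < R) (hft : f t < R)
    (U : Set ℝ) (hU : U = {τ ∈ Set.Ioo s t | R < f τ ∧ f τ < 2*R})
    (C12 C21 : Set (ℝ × ℝ))
    (hC12 : C12 = {q : ℝ × ℝ | IsCompOf U q.1 q.2 ∧ f q.1 = R ∧ f q.2 = 2*R})
    (hC21 : C21 = {q : ℝ × ℝ | IsCompOf U q.1 q.2 ∧ f q.1 = 2*R ∧ f q.2 = R}) :
    C12.Finite ∧ C21.Finite ∧ C12.ncard = C21.ncard := by
  subst hU hC12 hC21
  set U : Set ℝ := {τ ∈ Set.Ioo s t | R < f τ ∧ f τ < 2*R} with hU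
  set C12 : Set (ℝ × ℝ) := {q : ℝ × ℝ | IsCompOf U q.1 q.2 ∧ f q.1 = R ∧ f q.2 = 2*R} with hC12
  set C21 : Set (ℝ × ℝ) := {q : ℝ × ℝ | IsCompOf U q.1 q.2 ∧ f q.1 = 2*R ∧ f q.2 = R} with hC21
  have hmapsF : ∀ q ∈ C12, Phi t R f q ∈ C21 ∧ Psi s R f (Phi t R f q) = q := by
    rintro ⟨a, b⟩ ⟨hcomp, h1, h2⟩
    obtain ⟨d, c, hPhi, hcdc, hfd, hfc, hPsi⟩ := forward s t R hR f hf hft a b hcomp h1 h2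
    rw [hPhi]
    exact ⟨⟨hcdc, hfd, hfc⟩, hPsi⟩
  have hmapsB : ∀ q ∈ C21, Psi s R f q ∈ C12 ∧ Phi t R f (Psi s R f q) = q := by
    rintro ⟨a, b⟩ ⟨hcomp, h1, h2⟩
    obtain ⟨c, d, hPsi, hccd, hfc, hfd, hPhi⟩ := backward s t R hR f hf hfs a b hcomp h1 h2
    rw [hPsi]
    exact ⟨⟨hccd, hfc, hfd⟩, hPhi⟩
  have hinv : Set.InvOn (Psi s R f) (Phi t R f) C12 C21 :=
    ⟨fun q hq => (hmapsF q hq).2, fun q hq => (hmapsB q hq).2⟩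
  have hbij : Set.BijOn (Phi t R f) C12 C21 :=
    hinv.bijOn (fun q hq => (hmapsF q hq).1) (fun q hq => (hmapsB q hq).1)
  have hfin : C12.Finite := by
    rw [← Set.not_infinite]
    intro hinf
    set e := hinf.natEmbedding with he
    have hmem : ∀ n : ℕ, (e n : ℝ × ℝ) ∈ Set.Icc s t ×ˢ Set.Icc s t := by
      intro n
      obtain ⟨⟨hab, hsub, -, -⟩, -, -⟩ := (e n).2
      have h := (Set.Ioo_subset_Ioo_iff hab).1 (fun τ hτ => (hsub hτ).1)
      exact ⟨⟨h.1, le_trans hab.le h.2⟩, ⟨le_trans h.1 hab.le, h.2⟩⟩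
    obtain ⟨p, hp, φ, hφ, hlim⟩ := (isCompact_Icc.prod isCompact_Icc).tendsto_subseq hmem
    have h1 : Tendsto (fun k => ((e (φ k) : ℝ × ℝ)).1) atTop (𝓝 p.1) :=
      (continuous_fst.tendsto p).comp hlim
    have h2 : Tendsto (fun k => ((e (φ k) : ℝ × ℝ)).2) atTop (𝓝 p.2) :=
      (continuous_snd.tendsto p).comp hlim
    have hle : p.1 ≤ p.2 :=
      le_of_tendsto_of_tendsto' h1 h2 (fun k => ((e (φ k)).2.1.1).le)
    rcases eq_or_lt_of_le hle with heq | hlt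
    · -- the components shrink to a point: f would take both values R and 2R there
      have hfa : Tendsto (fun k => f ((e (φ k) : ℝ × ℝ)).1) atTop (𝓝 (f p.1)) :=
        (hf p.1 hp.1).tendsto.comp (tendsto_nhdsWithin_iff.2
          ⟨h1, Filter.Eventually.of_forall fun k => (hmem (φ k)).1⟩)
      have hfb : Tendsto (fun k => f ((e (φ k) : ℝ × ℝ)).2) atTop (𝓝 (f p.2)) :=
        (hf p.2 hp.2).tendsto.comp (tendsto_nhdsWithin_iff.2
          ⟨h2, Filter.Eventually.of_forall fun k => (hmem (φ k)).2⟩)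
      have hva : ∀ k : ℕ, f ((e (φ k) : ℝ × ℝ)).1 = R := fun k => (e (φ k)).2.2.1
      have hvb : ∀ k : ℕ, f ((e (φ k) : ℝ × ℝ)).2 = 2*R := fun k => (e (φ k)).2.2.2
      simp only [hva] at hfa
      simp only [hvb] at hfb
      have hA : f p.1 = R := tendsto_nhds_unique hfa tendsto_const_nhds
      have hB : f p.2 = 2*R := tendsto_nhds_unique hfb tendsto_const_nhds
      rw [heq, hB] at hA
      linarith
    · -- two distinct components would both contain the midpoint
      have hev := (h1.eventually_lt_const (show p.1 < (p.1 + p.2)/2 by linarith)).and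
        (h2.eventually_const_lt (show (p.1 + p.2)/2 < p.2 by linarith))
      obtain ⟨N, hN⟩ := eventually_atTop.1 hev
      have hN1 := hN N le_rfl
      have hN2 := hN (N+1) (Nat.le_succ N)
      obtain ⟨hA, hB⟩ := comp_unique (e (φ N)).2.1 (e (φ (N+1))).2.1
        ⟨hN1.1, hN1.2⟩ ⟨hN2.1, hN2.2⟩
      have : e (φ N) = e (φ (N+1)) := Subtype.ext (Prod.ext hA hB)
      have := hφ.injective (e.injective this)
      omega
  refine ⟨hfin, ?_, ?_⟩
  · rw [← hbij.image_eq]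
    exact hfin.image _
  · rw [← hbij.image_eq, Set.ncard_image_of_injOn hbij.injOn]
end

section
/- Let $f:[s,t]\to\mathbb{R}$ be continuous with $f(s)<R$ and $f(t)<R$, $R>0$. If there exists a connected component $(a,b)$ of $\{\tau: R<f(\tau)<2R\}$ with $f(a)=R$, $f(b)=2R$ (type '12'), then there exists a connected component $(c,d)$ with $f(c)=2R$, $f(d)=R$ (type '21'), and moreover one may take $b\le c$. -/
open Filter Set Topology

theorem stmt8 (s t R : ℝ) (hst : s < t) (hR : 0 < R)
    (f : ℝ → ℝ) (hf : ContinuousOn f (Set.Icc s t))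
    (hfs : f s < R) (hft : f t < R)
    (U : Set ℝ) (hU : U = {τ ∈ Set.Ioo s t | R < f τ ∧ f τ < 2*R})
    (a b : ℝ) (h12 : IsCompOf U a b) (ha : f a = R) (hb : f b = 2*R) :
    ∃ c d : ℝ, IsCompOf U c d ∧ f c = 2*R ∧ f d = R ∧ b ≤ c := by
  obtain ⟨hab, hsub, haU, hbU⟩ := h12
  subst hU
  -- s < b
  have hx : (a + b) / 2 ∈ Set.Ioo a b := ⟨by linarith, by linarith⟩
  have hxU := hsub hx
  have hsb : s < b := lt_trans hxU.1.1 hx.2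
  -- b ≤ t
  have hbt' : b ≤ t := by
    by_contra h
    push_neg at h
    have hy : (max a t + b) / 2 ∈ Set.Ioo a b := by
      constructor
      · have := le_max_left a t; linarith [max_lt hab h]
      · linarith [max_lt hab h]
    have hyU := hsub hy
    have : t < (max a t + b) / 2 := by
      have := le_max_right a t; linarith
    exact absurd hyU.1.2 (not_lt.mpr this.le)
  have hbt : b < t := lt_of_le_of_ne hbt' (by intro h; rw [h] at hb; linarith)
  have hfbt : ContinuousOn f (Set.Icc b t) := hf.mono (Set.Icc_subset_Icc hsb.le le_rfl)
  -- the set where f = R on [b, t]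
  set S : Set ℝ := Set.Icc b t ∩ f ⁻¹' {R} with hS
  have hSclosed : IsClosed S := hfbt.preimage_isClosed_of_isClosed isClosed_Icc isClosed_singleton
  have hSne : S.Nonempty := by
    have : R ∈ Set.Icc (f t) (f b) := ⟨hft.le, by rw [hb]; linarith⟩
    obtain ⟨τ, hτ, hfτ⟩ := intermediate_value_Icc' hbt.le hfbt this
    exact ⟨τ, hτ, hfτ⟩
  have hSbdd : BddBelow S := ⟨b, fun x hx => hx.1.1⟩
  set d := sInf S with hd
  have hdS : d ∈ S := hSclosed.csInf_mem hSne hSbdd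
  have hfd : f d = R := hdS.2
  have hbd : b < d := lt_of_le_of_ne hdS.1.1 (by intro h; rw [h, hfd] at hb; linarith)
  have hdt : d ≤ t := hdS.1.2
  -- f > R on [b, d)
  have hgtR : ∀ τ ∈ Set.Ico b d, R < f τ := by
    intro τ ⟨hbτ, hτd⟩
    by_contra h
    push_neg at h
    have hτt : τ ≤ t := le_trans hτd.le hdt
    have hcont : ContinuousOn f (Set.Icc b τ) := hfbt.mono (Set.Icc_subset_Icc le_rfl hτt)
    have : R ∈ Set.Icc (f τ) (f b) := ⟨h, by rw [hb]; linarith⟩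
    obtain ⟨σ, hσ, hfσ⟩ := intermediate_value_Icc' hbτ hcont this
    have hσS : σ ∈ S := ⟨⟨hσ.1, le_trans hσ.2 hτt⟩, hfσ⟩
    have := csInf_le hSbdd hσS
    linarith [hσ.2]
  -- the set where f = 2R on [b, d]
  have hfbd : ContinuousOn f (Set.Icc b d) := hfbt.mono (Set.Icc_subset_Icc le_rfl hdt)
  set T : Set ℝ := Set.Icc b d ∩ f ⁻¹' {2*R} with hT
  have hTclosed : IsClosed T := hfbd.preimage_isClosed_of_isClosed isClosed_Icc isClosed_singleton
  have hTne : T.Nonempty := ⟨b, ⟨le_rfl, hbd.le⟩, hb⟩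
  have hTbdd : BddAbove T := ⟨d, fun x hx => hx.1.2⟩
  set c := sSup T with hc
  have hcT : c ∈ T := hTclosed.csSup_mem hTne hTbdd
  have hfc : f c = 2*R := hcT.2
  have hbc : b ≤ c := hcT.1.1
  have hcd : c < d := lt_of_le_of_ne hcT.1.2 (by intro h; rw [h, hfd] at hfc; linarith)
  -- f < 2R on (c, d]
  have hlt2R : ∀ τ ∈ Set.Ioc c d, f τ < 2*R := by
    intro τ ⟨hcτ, hτd⟩
    by_contra h
    push_neg at h
    have hcont : ContinuousOn f (Set.Icc τ d) :=
      hfbd.mono (Set.Icc_subset_Icc (le_trans hbc hcτ.le) le_rfl)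
    have : 2*R ∈ Set.Icc (f d) (f τ) := ⟨by rw [hfd]; linarith, h⟩
    obtain ⟨σ, hσ, hfσ⟩ := intermediate_value_Icc' hτd hcont this
    have hσT : σ ∈ T := ⟨⟨le_trans hbc (le_trans hcτ.le hσ.1), hσ.2⟩, hfσ⟩
    have := le_csSup hTbdd hσT
    linarith [hσ.1]
  refine ⟨c, d, ⟨hcd, ?_, ?_, ?_⟩, hfc, hfd, hbc⟩
  · intro τ ⟨hcτ, hτd⟩
    refine ⟨⟨lt_of_lt_of_le hsb (le_trans hbc hcτ.le), lt_of_lt_of_le hτd hdt⟩,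
      hgtR τ ⟨le_trans hbc hcτ.le, hτd⟩, hlt2R τ ⟨hcτ, hτd.le⟩⟩
  · intro hcU
    exact absurd hcU.2.2 (by rw [hfc]; exact lt_irrefl _)
  · intro hdU
    exact absurd hdU.2.1 (by rw [hfd]; exact lt_irrefl _)
end
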